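/- Let n ≥ 1, M ≥ 0, and let H : ℝⁿ → ℝ be convex with H(0) = 0 and |p|² ≤ H(p) ≤ |p|² + M|p| for all p ∈ ℝⁿ, and assume H is radially strictly convex. For A ≥ 1 define H_A(q) := A²·H(q/A), and for each unit vector p ∈ ℝⁿ let λ_{p,A} > 0 be the unique minimizer of λ ↦ (1 + H_A(λp))/λ over λ > 0. Then lim_{A→∞} sup_{|p|=1} λ_{p,A}/A = 0 and lim_{A→∞} sup_{|p|=1} H_A(λ_{p,A} p)/A² = 0. -/

import Mathlib

/-- The effective burning velocity associated with an effective Hamiltonian `H`: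
`α(p) = inf_{λ > 0} (1 + H(λ p)) / λ`. -/
noncomputable def effAlpha {n : ℕ} (H : EuclideanSpace ℝ (Fin n) → ℝ)
    (p : EuclideanSpace ℝ (Fin n)) : ℝ :=
  sInf {y : ℝ | ∃ l : ℝ, 0 < l ∧ (1 + H (l • p)) / l = y}

/-- `H` is radially strictly convex: whenever `H` is affine on a segment `[p₁, p₂]`
with `H(p₂) > 0`, it is constant on that segment. -/
def RadStrictConvex {n : ℕ} (H : EuclideanSpace ℝ (Fin n) → ℝ) : Prop :=
  ∀ p₁ p₂ : EuclideanSpace ℝ (Fin n),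
    (∀ s ∈ Set.Icc (0:ℝ) 1,
      H ((1 - s) • p₁ + s • p₂) = (1 - s) * H p₁ + s * H p₂) →
    0 < H p₂ →
    ∀ s ∈ Set.Icc (0:ℝ) 1, H ((1 - s) • p₁ + s • p₂) = H p₂


variable {n : ℕ}

local notation "E" => EuclideanSpace ℝ (Fin n)

/-- slope monotonicity -/
lemma slope_mono' (H : EuclideanSpace ℝ (Fin n) → ℝ) (hconv : ConvexOn ℝ Set.univ H)
    (h0 : H 0 = 0) (p : EuclideanSpace ℝ (Fin n)) {a b : ℝ} (ha : 0 < a) (hab : a ≤ b) :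
    H (a • p) * b ≤ H (b • p) * a := by
  have hb : 0 < b := ha.trans_le hab
  have h1 : (0:ℝ) ≤ a / b := by positivity
  have h2 : (0:ℝ) ≤ 1 - a / b := by
    have : a / b ≤ 1 := (div_le_one hb).2 hab
    linarith
  have key := hconv.2 (Set.mem_univ (b • p)) (Set.mem_univ (0 : EuclideanSpace ℝ (Fin n)))
    h1 h2 (by ring)
  have hv : (a / b) • (b • p) + (1 - a / b) • (0 : EuclideanSpace ℝ (Fin n)) = a • p := by
    rw [smul_zero, add_zero, smul_smul, div_mul_cancel₀ _ hb.ne']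
  simp only [smul_eq_mul] at key
  rw [hv, h0] at key
  have : H (a • p) ≤ (a / b) * H (b • p) := by linarith
  have := mul_le_mul_of_nonneg_right this hb.le
  calc H (a • p) * b ≤ (a / b) * H (b • p) * b := this
    _ = H (b • p) * a := by field_simp

/-- convex bound on segment from 0 -/
lemma seg_le (H : EuclideanSpace ℝ (Fin n) → ℝ) (hconv : ConvexOn ℝ Set.univ H)
    (h0 : H 0 = 0) (q : EuclideanSpace ℝ (Fin n)) {s : ℝ} (hs0 : 0 ≤ s) (hs1 : s ≤ 1) :
    H (s • q) ≤ s * H q := by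
  have key := hconv.2 (Set.mem_univ q) (Set.mem_univ (0 : EuclideanSpace ℝ (Fin n)))
    hs0 (by linarith : (0:ℝ) ≤ 1 - s) (by ring)
  simp only [smul_eq_mul] at key
  rw [smul_zero, add_zero, h0] at key
  linarith

lemma c_pos (M : ℝ) (H : EuclideanSpace ℝ (Fin n) → ℝ) (hconv : ConvexOn ℝ Set.univ H)
    (h0 : H 0 = 0) (hbounds : ∀ p, ‖p‖ ^ 2 ≤ H p ∧ H p ≤ ‖p‖ ^ 2 + M * ‖p‖)
    (hrad : RadStrictConvex H) {d : ℝ} (hd : 0 < d) (p : EuclideanSpace ℝ (Fin n))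
    (hp : ‖p‖ = 1) : 0 < H (d • p) - 2 * H ((d / 2) • p) := by
  have hdp : (0:ℝ) < H (d • p) := by
    have := (hbounds (d • p)).1
    have hn : ‖d • p‖ = d := by rw [norm_smul, hp, mul_one, Real.norm_eq_abs, abs_of_pos hd]
    rw [hn] at this
    nlinarith
  have hmid : H ((d / 2) • p) ≤ (1 / 2) * H (d • p) := by
    have := seg_le H hconv h0 (d • p) (by norm_num : (0:ℝ) ≤ 1/2) (by norm_num)
    rwa [smul_smul, show (1/2 : ℝ) * d = d / 2 by ring] at this
  by_contra hcon
  push_neg at hcon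
  have hmid' : H ((d / 2) • p) = (1 / 2) * H (d • p) := by linarith
  -- affine on segment
  have haff : ∀ s ∈ Set.Icc (0:ℝ) 1,
      H ((1 - s) • (0 : EuclideanSpace ℝ (Fin n)) + s • (d • p))
        = (1 - s) * H 0 + s * H (d • p) := by
    intro s hs
    obtain ⟨hs0, hs1⟩ := hs
    rw [smul_zero, zero_add, h0, mul_zero, zero_add]
    have hle := seg_le H hconv h0 (d • p) hs0 hs1
    have hge : s * H (d • p) ≤ H (s • (d • p)) := by
      rcases le_or_gt (1/2 : ℝ) s with hhalf | hhalf
      · -- s ≥ 1/2 : (d/2)•p = (1/(2s)) • (s • (d•p))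
        have hs0' : (0:ℝ) < s := by linarith
        have h1 : (0:ℝ) ≤ 1 / (2 * s) := by positivity
        have h2 : 1 / (2 * s) ≤ 1 := by
          rw [div_le_one (by linarith)]; linarith
        have := seg_le H hconv h0 (s • (d • p)) h1 h2
        have hv : (1 / (2 * s)) • (s • (d • p)) = (d / 2) • p := by
          rw [smul_smul, smul_smul]
          congr 1
          field_simp
        rw [hv, hmid'] at this
        -- (1/2) H(dp) ≤ (1/(2s)) H(s d p)
        have := mul_le_mul_of_nonneg_right this (by linarith : (0:ℝ) ≤ 2 * s)
        calc s * H (d • p) = 1/2 * H (d • p) * (2 * s) := by ring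
          _ ≤ 1 / (2 * s) * H (s • (d • p)) * (2 * s) := this
          _ = H (s • (d • p)) := by field_simp
      · -- s < 1/2
        set t : ℝ := 1 / (2 * (1 - s)) with ht
        have h1s : (0:ℝ) < 1 - s := by linarith
        have ht0 : (0:ℝ) < t := by positivity
        have ht1 : t ≤ 1 := by
          rw [ht, div_le_one (by linarith)]; linarith
        have key := hconv.2 (Set.mem_univ (s • (d • p))) (Set.mem_univ (d • p))
          ht0.le (by linarith : (0:ℝ) ≤ 1 - t) (by ring)
        have hv : t • (s • (d • p)) + (1 - t) • (d • p) = (d / 2) • p := by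
          rw [smul_smul, smul_smul, smul_smul, ← add_smul]
          congr 1
          rw [ht]
          field_simp
          ring
        simp only [smul_eq_mul] at key
        rw [hv, hmid'] at key
        -- 1/2 H(dp) ≤ t H(s d p) + (1-t) H(dp)
        have hts : t - 1/2 = s * t := by
          rw [ht]; field_simp; ring
        have := mul_le_mul_of_nonneg_right
          (by linarith : (t - 1/2) * H (d • p) ≤ t * H (s • (d • p))) (le_of_lt ht0)
        nlinarith [this, ht0]
    linarith
  have := hrad 0 (d • p) haff hdp 0 (by norm_num)
  simp only [sub_zero, one_smul, zero_smul, add_zero, h0] at this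
  linarith

set_option maxHeartbeats 1000000 in
/-- Let `H` be convex with `H(0) = 0`, `|p|² ≤ H(p) ≤ |p|² + M|p|`,
radially strictly convex; for `A ≥ 1` set `H_A(q) = A² H(q/A)` and let `λ_{p,A} > 0`
be the minimizer of `λ ↦ (1 + H_A(λ p))/λ` for each unit vector `p`.  Then
`sup_{|p|=1} λ_{p,A}/A → 0` and `sup_{|p|=1} H_A(λ_{p,A} p)/A² → 0` as `A → ∞`. -/
theorem statement19 {n : ℕ} (hn : 1 ≤ n) (M : ℝ) (hM : 0 ≤ M)
    (H : EuclideanSpace ℝ (Fin n) → ℝ) (hconv : ConvexOn ℝ Set.univ H)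
    (h0 : H 0 = 0)
    (hbounds : ∀ p, ‖p‖ ^ 2 ≤ H p ∧ H p ≤ ‖p‖ ^ 2 + M * ‖p‖)
    (hrad : RadStrictConvex H)
    (lam : ℝ → EuclideanSpace ℝ (Fin n) → ℝ)
    (hlam : ∀ A : ℝ, 1 ≤ A → ∀ p : EuclideanSpace ℝ (Fin n), ‖p‖ = 1 →
      0 < lam A p ∧
        (1 + A ^ 2 * H (A⁻¹ • (lam A p • p))) / lam A p
          = effAlpha (fun q => A ^ 2 * H (A⁻¹ • q)) p) :
    ∀ δ > (0:ℝ), ∃ A₀ : ℝ, 1 ≤ A₀ ∧ ∀ A : ℝ, A₀ ≤ A →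
      ∀ p : EuclideanSpace ℝ (Fin n), ‖p‖ = 1 →
        lam A p / A < δ ∧ (A ^ 2 * H (A⁻¹ • (lam A p • p))) / A ^ 2 < δ := by
  intro δ hδ
  have hM1 : (0:ℝ) < 1 + M := by linarith
  set d : ℝ := min (min δ 1) (δ / (1 + M)) with hdd
  have hd : 0 < d := by
    apply lt_min (lt_min hδ one_pos)
    positivity
  have hd1 : d ≤ 1 := (min_le_left _ _).trans (min_le_right _ _)
  have hdδ : d ≤ δ := (min_le_left _ _).trans (min_le_left _ _)
  have hdM : d * (1 + M) ≤ δ := by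
    have h : d ≤ δ / (1 + M) := min_le_right _ _
    calc d * (1 + M) ≤ (δ / (1 + M)) * (1 + M) := by nlinarith
      _ = δ := by field_simp
  clear_value d
  -- continuity of H
  have hHc : Continuous H := by
    rw [← continuousOn_univ]
    exact hconv.continuousOn isOpen_univ
  -- minimum of c over the sphere
  have hsphne : (Metric.sphere (0 : EuclideanSpace ℝ (Fin n)) 1).Nonempty := by
    refine ⟨EuclideanSpace.single (⟨0, hn⟩ : Fin n) (1:ℝ), ?_⟩
    rw [mem_sphere_zero_iff_norm, EuclideanSpace.norm_single]
    norm_num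
  obtain ⟨q, hq, hqmin⟩ := (isCompact_sphere (0 : EuclideanSpace ℝ (Fin n)) 1).exists_isMinOn
    hsphne (Continuous.continuousOn (by fun_prop :
      Continuous (fun p : EuclideanSpace ℝ (Fin n) => H (d • p) - 2 * H ((d / 2) • p))))
  set ε : ℝ := H (d • q) - 2 * H ((d / 2) • q) with hεd
  have hε : 0 < ε :=
    c_pos M H hconv h0 hbounds hrad hd q (mem_sphere_zero_iff_norm.mp hq)
  clear_value ε
  refine ⟨max 1 (Real.sqrt (2 / ε) + 1), le_max_left _ _, ?_⟩
  intro A hA p hp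
  have hA1 : 1 ≤ A := (le_max_left _ _).trans hA
  have hA0 : 0 < A := by linarith
  have hA2 : 2 < A ^ 2 * ε := by
    have hs : Real.sqrt (2 / ε) < A :=
      lt_of_lt_of_le (lt_add_one _) ((le_max_right _ _).trans hA)
    have hsq : Real.sqrt (2 / ε) ^ 2 = 2 / ε := Real.sq_sqrt (by positivity)
    have h2 : 2 / ε < A ^ 2 := by nlinarith [Real.sqrt_nonneg (2 / ε)]
    calc (2:ℝ) = (2 / ε) * ε := by field_simp
      _ < A ^ 2 * ε := mul_lt_mul_of_pos_right h2 hε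
  obtain ⟨hl0, heq⟩ := hlam A hA1 p hp
  set l := lam A p with hldef
  clear_value l
  set μ : ℝ := l / A with hμdef
  clear_value μ
  have hμ0 : 0 < μ := by rw [hμdef]; positivity
  have hlμ : l = A * μ := by rw [hμdef]; field_simp
  have hsm1 : A⁻¹ • (l • p) = μ • p := by
    rw [smul_smul]; congr 1; rw [hμdef]; field_simp
  -- the infimum set is bounded below and contains the value at A*d/2
  have hbdd : BddBelow {y : ℝ | ∃ l' : ℝ, 0 < l' ∧
      (1 + A ^ 2 * H (A⁻¹ • (l' • p))) / l' = y} := by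
    refine ⟨0, ?_⟩
    rintro y ⟨l', hl', rfl⟩
    have h1 : 0 ≤ H (A⁻¹ • (l' • p)) := le_trans (by positivity) (hbounds _).1
    positivity
  have hmem : (1 + A ^ 2 * H (A⁻¹ • ((A * d / 2) • p))) / (A * d / 2) ∈
      {y : ℝ | ∃ l' : ℝ, 0 < l' ∧ (1 + A ^ 2 * H (A⁻¹ • (l' • p))) / l' = y} :=
    ⟨A * d / 2, by positivity, rfl⟩
  have hle : (1 + A ^ 2 * H (A⁻¹ • (l • p))) / l
      ≤ (1 + A ^ 2 * H (A⁻¹ • ((A * d / 2) • p))) / (A * d / 2) := by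
    rw [heq]
    exact csInf_le hbdd hmem
  have hsm2 : A⁻¹ • ((A * d / 2) • p) = (d / 2) • p := by
    rw [smul_smul]; congr 1; field_simp
  rw [hsm1, hsm2] at hle
  set x := H (μ • p) with hxd
  set y := H (d • p) with hyd
  set z := H ((d / 2) • p) with hzd
  have hx0 : 0 ≤ x := le_trans (by positivity) (hbounds _).1
  have hz0 : 0 ≤ z := le_trans (by positivity) (hbounds _).1
  have hεp : ε ≤ y - 2 * z := by
    have h : H (d • q) - 2 * H ((d / 2) • q) ≤ H (d • p) - 2 * H ((d / 2) • p) :=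
      hqmin (mem_sphere_zero_iff_norm.mpr hp)
    rw [hεd, hyd, hzd]
    exact h
  clear_value x y z
  -- main claim : μ < d
  have hμd : μ < d := by
    by_contra hcon
    push_neg at hcon
    have hslope : y * μ ≤ x * d := by
      rw [hxd, hyd]; exact slope_mono' H hconv h0 p hd hcon
    have hdiv : (1 + A ^ 2 * x) * (A * d / 2) ≤ (1 + A ^ 2 * z) * l := by
      rw [div_le_div_iff₀ hl0 (by positivity)] at hle
      linarith
    rw [hlμ] at hdiv
    have h3 : A ^ 3 * (y * μ) ≤ A ^ 3 * (x * d) :=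
      mul_le_mul_of_nonneg_left hslope (by positivity)
    have hdiv' : A * d / 2 + A ^ 3 * (x * d) / 2 ≤ A * μ + A ^ 3 * (z * μ) := by
      have e1 : (1 + A ^ 2 * x) * (A * d / 2) = A * d / 2 + A ^ 3 * (x * d) / 2 := by ring
      have e2 : (1 + A ^ 2 * z) * (A * μ) = A * μ + A ^ 3 * (z * μ) := by ring
      rw [e1, e2] at hdiv
      exact hdiv
    have h4 : A ^ 3 * (y * μ) ≤ 2 * (A * μ) + 2 * (A ^ 3 * (z * μ)) :=
      by linarith [h3, hdiv', mul_pos hA0 hd]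
    have hAμ : 0 < A * μ := mul_pos hA0 hμ0
    have h5 : A ^ 2 * y ≤ 2 + 2 * (A ^ 2 * z) := by
      by_contra hc
      push_neg at hc
      have h6 := mul_lt_mul_of_pos_right hc hAμ
      nlinarith [h6, h4]
    have h7 : A ^ 2 * ε ≤ A ^ 2 * (y - 2 * z) :=
      mul_le_mul_of_nonneg_left hεp (by positivity)
    nlinarith [h5, h7, hA2]
  constructor
  · exact lt_of_lt_of_le hμd hdδ
  · rw [hsm1, ← hxd]
    have hxb : x ≤ μ ^ 2 + M * μ := by
      have hb := (hbounds (μ • p)).2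
      have hnμ : ‖μ • p‖ = μ := by
        rw [norm_smul, hp, mul_one, Real.norm_eq_abs, abs_of_pos hμ0]
      rw [hnμ] at hb
      rw [hxd]
      exact hb
    have hA2ne : (A:ℝ) ^ 2 ≠ 0 := by positivity
    rw [mul_div_cancel_left₀ _ hA2ne]
    nlinarith [hxb, hμd, hμ0, hd1, hdM, hM]
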